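/- Let ℓ = n(n−1)/2 and let c_1, …, c_ℓ ∈ {0, …, n−2} be indices such that the product s_{c_1} s_{c_2} ⋯ s_{c_ℓ} of the corresponding adjacent transpositions equals the longest element w_0 of the symmetric group on {0, …, n−1} (the order-reversing permutation); since the length of w_0 is n(n−1)/2, such an expression is automatically reduced. Set ∂_{w_0} := ∂_{c_1} ∘ ∂_{c_2} ∘ ⋯ ∘ ∂_{c_ℓ}. If R is a nontrivial commutative ring, then ∂_{w_0} is a nonzero operator on R[x_0, …, x_{n−1}], i.e. there exists a polynomial g with ∂_{w_0}(g) ≠ 0. -/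

import Mathlib

/-!
Statement 12: Let `∂_0, …, ∂_{n-2}` be the Demazure operators on `R[x_0, …, x_{n-1}]`
(here `n = N + 2`, indices `c : Fin (N+1)`, `x_c = X c.castSucc`, `x_{c+1} = X c.succ`),
each characterized by `(x_c − x_{c+1}) * ∂_c g = g − s_c g`.  Let `c_1, …, c_ℓ`
(`ℓ = n(n−1)/2`) be a word whose product of adjacent transpositions is the longest element
`w_0` (the order-reversing permutation), and set `∂_{w_0} = ∂_{c_1} ∘ ⋯ ∘ ∂_{c_ℓ}`.
If `R` is nontrivial, then `∂_{w_0}` is a nonzero operator: `∂_{w_0} g ≠ 0` for some `g`.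
-/

open MvPolynomial


namespace DemAux
open Finset

/-! ### Inversions of permutations of `Fin n` -/

variable {n : ℕ}

def invSet (w : Equiv.Perm (Fin n)) : Finset (Fin n × Fin n) :=
  Finset.univ.filter fun p => p.1 < p.2 ∧ w p.2 < w p.1

def invCount (w : Equiv.Perm (Fin n)) : ℕ := (invSet w).card

lemma swap_adj_lt_iff {a b x y : Fin n} (hab : (a : ℕ) + 1 = (b : ℕ))
    (h1 : ¬(x = a ∧ y = b)) (h2 : ¬(x = b ∧ y = a)) :
    Equiv.swap a b x < Equiv.swap a b y ↔ x < y := by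
  simp only [Equiv.swap_apply_def, Fin.lt_def, Fin.ext_iff] at *
  split_ifs <;> omega

lemma invCount_one : invCount (1 : Equiv.Perm (Fin n)) = 0 := by
  simp only [invCount, invSet]
  rw [Finset.card_eq_zero]
  ext p
  rw [Finset.mem_filter]
  simp only [Finset.mem_filter, Finset.mem_univ, true_and, Finset.notMem_empty, iff_false,
    Equiv.Perm.coe_one, id_eq]
  rintro ⟨h1, h2⟩
  exact absurd h2 (not_lt.mpr h1.le)

lemma invCount_swap_mul_le (a b : Fin n) (hab : (a : ℕ) + 1 = (b : ℕ))
    (w : Equiv.Perm (Fin n)) :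
    invCount (Equiv.swap a b * w) ≤ invCount w + 1 := by
  classical
  set q : Fin n × Fin n :=
    if w⁻¹ a < w⁻¹ b then (w⁻¹ a, w⁻¹ b) else (w⁻¹ b, w⁻¹ a) with hq
  have hsub : invSet (Equiv.swap a b * w) ⊆ insert q (invSet w) := by
    intro p hp
    change p ∈ invSet (Equiv.swap a b * w) at hp
    change p ∈ insert q (invSet w)
    rw [invSet, Finset.mem_filter] at hp
    simp only [invSet, Finset.mem_filter, Finset.mem_univ, true_and,
      Equiv.Perm.mul_apply] at hp
    by_cases hpq : p = q
    · rw [hpq]; exact Finset.mem_insert_self q _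
    · refine Finset.mem_insert_of_mem ?_
      rw [invSet, Finset.mem_filter]
      simp only [invSet, Finset.mem_filter, Finset.mem_univ, true_and]
      refine ⟨hp.1, ?_⟩
      have h1 : ¬(w p.2 = a ∧ w p.1 = b) := by
        rintro ⟨ha, hb⟩
        have e1 : w⁻¹ a = p.2 := by rw [← ha]; exact w.symm_apply_apply p.2
        have e2 : w⁻¹ b = p.1 := by rw [← hb]; exact w.symm_apply_apply p.1
        have : ¬ (w⁻¹ a < w⁻¹ b) := by rw [e1, e2]; exact not_lt.mpr hp.1.le
        apply hpq
        rw [hq, if_neg this, e1, e2]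
      have h2 : ¬(w p.2 = b ∧ w p.1 = a) := by
        rintro ⟨hb, ha⟩
        have e1 : w⁻¹ a = p.1 := by rw [← ha]; exact w.symm_apply_apply p.1
        have e2 : w⁻¹ b = p.2 := by rw [← hb]; exact w.symm_apply_apply p.2
        have : w⁻¹ a < w⁻¹ b := by rw [e1, e2]; exact hp.1
        apply hpq
        rw [hq, if_pos this, e1, e2]
      exact (swap_adj_lt_iff hab h1 h2).mp hp.2
  calc (invSet (Equiv.swap a b * w)).card ≤ (insert q (invSet w)).card :=
        Finset.card_le_card hsub
    _ ≤ (invSet w).card + 1 := Finset.card_insert_le _ _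

lemma invCount_prod_le {m : ℕ} (M : List (Fin (m + 1))) :
    invCount ((M.map fun c => Equiv.swap c.castSucc c.succ).prod) ≤ M.length := by
  induction M with
  | nil => simp [invCount_one]
  | cons c M ih =>
    rw [List.map_cons, List.prod_cons, List.length_cons]
    have hab : ((c.castSucc : Fin (m + 2)) : ℕ) + 1 = ((c.succ : Fin (m + 2)) : ℕ) := by
      simp
    exact le_trans (invCount_swap_mul_le _ _ hab _) (by omega)

lemma card_lt_pairs : ((Finset.univ : Finset (Fin n × Fin n)).filter
    fun p => p.1 < p.2).card = n * (n - 1) / 2 := by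
  rw [Finset.card_filter, ← Finset.univ_product_univ, Finset.sum_product_right]
  have key : ∀ y : Fin n, (∑ x : Fin n, if x < y then 1 else 0) = (y : ℕ) := by
    intro y
    rw [← Finset.card_filter]
    have : (Finset.univ.filter fun x : Fin n => x < y) = Finset.Iio y := by
      ext x; simp
    rw [this, Fin.card_Iio]
  rw [Finset.sum_congr rfl fun y _ => key y]
  rw [Fin.sum_univ_eq_sum_range (fun i => i) n, Finset.sum_range_id]

lemma invCount_rev : invCount (Fin.revPerm : Equiv.Perm (Fin n)) = n * (n - 1) / 2 := by
  rw [invCount, invSet, ← card_lt_pairs]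
  congr 1
  ext p
  simp only [Finset.mem_filter, Finset.mem_univ, true_and, Fin.revPerm_apply]
  constructor
  · rintro ⟨h, _⟩; exact h
  · intro h; exact ⟨h, Fin.rev_lt_rev.mpr h⟩

/-! ### Abstract divided-difference calculus over a field -/

section Ops
variable {N : ℕ} {K : Type*} [Field K]

abbrev sgen (c : Fin (N + 1)) : Equiv.Perm (Fin (N + 2)) :=
  Equiv.swap c.castSucc c.succ

variable (t : Fin (N + 1) → K) (S : Equiv.Perm (Fin (N + 2)) → K →+* K)

def DK : List (Fin (N + 1)) → K → K
  | [] => fun f => f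
  | c :: M => fun f => t c * (DK M f - S (sgen c) (DK M f))

def coef : List (Fin (N + 1)) → Equiv.Perm (Fin (N + 2)) → K
  | [] => fun w => if w = 1 then 1 else 0
  | c :: M => fun w => t c * coef M w - t c * S (sgen c) (coef M (sgen c * w))

lemma sgen_mul_sgen_mul (c : Fin (N + 1)) (w : Equiv.Perm (Fin (N + 2))) :
    sgen c * (sgen c * w) = w := by
  rw [← mul_assoc, Equiv.swap_mul_self, one_mul]

lemma DK_expand (hS : ∀ u v f, S (u * v) f = S u (S v f)) (hS1 : ∀ f : K, S 1 f = f) :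
    ∀ (M : List (Fin (N + 1))) (f : K),
      DK t S M f = ∑ w : Equiv.Perm (Fin (N + 2)), coef t S M w * S w f := by
  intro M
  induction M with
  | nil =>
    intro f
    simp only [DK, coef, ite_mul, one_mul, zero_mul, Finset.sum_ite_eq', Finset.mem_univ,
      if_true, hS1]
  | cons c M ih =>
    intro f
    have step1 : S (sgen c) (DK t S M f)
        = ∑ w : Equiv.Perm (Fin (N + 2)), S (sgen c) (coef t S M (sgen c * w)) * S w f := by
      rw [ih, map_sum]
      refine (Fintype.sum_equiv (Equiv.mulLeft (sgen c))
        (fun w => S (sgen c) (coef t S M (sgen c * w)) * S w f)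
        (fun w => S (sgen c) (coef t S M w * S w f)) (fun x => ?_)).symm
      simp only [Equiv.coe_mulLeft]
      rw [map_mul, ← hS, sgen_mul_sgen_mul]
    simp only [DK]
    rw [step1, ih, ← Finset.sum_sub_distrib, Finset.mul_sum]
    refine Finset.sum_congr rfl fun w _ => ?_
    simp only [coef]
    ring

lemma coef_support : ∀ (M : List (Fin (N + 1))) (w : Equiv.Perm (Fin (N + 2))),
    coef t S M w ≠ 0 →
    ∃ M' : List (Fin (N + 1)), List.Sublist M' M ∧ (M'.map fun c => sgen c).prod = w := by
  intro M
  induction M with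
  | nil =>
    intro w hw
    simp only [coef] at hw
    by_cases h : w = 1
    · exact ⟨[], List.nil_sublist _, by simp [h]⟩
    · simp [h] at hw
  | cons c M ih =>
    intro w hw
    simp only [coef] at hw
    have : coef t S M w ≠ 0 ∨ coef t S M (sgen c * w) ≠ 0 := by
      by_contra h
      push_neg at h
      rw [h.1, h.2] at hw
      simp at hw
    rcases this with h | h
    · obtain ⟨M', hsub, hprod⟩ := ih w h
      exact ⟨M', hsub.cons c, hprod⟩
    · obtain ⟨M', hsub, hprod⟩ := ih (sgen c * w) h
      refine ⟨c :: M', hsub.cons₂ c, ?_⟩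
      rw [List.map_cons, List.prod_cons, hprod, sgen_mul_sgen_mul]

lemma coef_top (ht : ∀ c, t c ≠ 0) :
    ∀ M : List (Fin (N + 1)),
      invCount ((M.map fun c => sgen c).prod) = M.length →
      coef t S M ((M.map fun c => sgen c).prod) ≠ 0 := by
  intro M
  induction M with
  | nil => intro _; simp [coef]
  | cons c M ih =>
    intro hred
    rw [List.map_cons, List.prod_cons] at hred ⊢
    set P : Equiv.Perm (Fin (N + 2)) := (M.map fun c => sgen c).prod with hP
    have hab : ((c.castSucc : Fin (N + 2)) : ℕ) + 1 = ((c.succ : Fin (N + 2)) : ℕ) := by simp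
    have hPle : invCount P ≤ M.length := invCount_prod_le M
    have hstep : invCount (sgen c * P) ≤ invCount P + 1 :=
      invCount_swap_mul_le _ _ hab P
    rw [List.length_cons] at hred
    have hPinv : invCount P = M.length := by omega
    have hterm1 : coef t S M (sgen c * P) = 0 := by
      by_contra h
      obtain ⟨M', hsub, hprodM'⟩ := coef_support t S M _ h
      have hle : invCount ((M'.map fun c => sgen c).prod) ≤ M'.length :=
        invCount_prod_le M'
      rw [hprodM'] at hle
      have := hsub.length_le
      omega
    have hterm2 : coef t S M P ≠ 0 := ih hPinv
    simp only [coef, hterm1]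
    intro h
    rw [sgen_mul_sgen_mul] at h
    have h0 : t c * S (sgen c) (coef t S M P) = 0 := by
      rw [mul_zero, zero_sub, neg_eq_zero] at h
      exact h
    rcases mul_eq_zero.mp h0 with h1 | h1
    · exact ht c h1
    · exact hterm2 ((map_eq_zero_iff _ (S (sgen c)).injective).mp h1)

end Ops

/-! ### Field automorphisms of the fraction field induced by permuting variables -/

section Perm
variable {N : ℕ} {k : Type*} [Field k]

noncomputable def Sf (w : Equiv.Perm (Fin (N + 2))) :
    FractionRing (MvPolynomial (Fin (N + 2)) k) →+*
      FractionRing (MvPolynomial (Fin (N + 2)) k) :=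
  IsFractionRing.lift
    (g := (algebraMap (MvPolynomial (Fin (N + 2)) k)
        (FractionRing (MvPolynomial (Fin (N + 2)) k))).comp
      (MvPolynomial.rename (⇑w)).toRingHom)
    ((IsFractionRing.injective _ _).comp (MvPolynomial.rename_injective _ w.injective))

lemma Sf_apply (w : Equiv.Perm (Fin (N + 2))) (p : MvPolynomial (Fin (N + 2)) k) :
    Sf w (algebraMap _ (FractionRing (MvPolynomial (Fin (N + 2)) k)) p)
      = algebraMap _ _ (rename (⇑w) p) := by
  rw [Sf, IsFractionRing.lift_algebraMap]
  rfl

lemma Sf_mul (u v : Equiv.Perm (Fin (N + 2)))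
    (f : FractionRing (MvPolynomial (Fin (N + 2)) k)) :
    Sf (u * v) f = Sf u (Sf v f) := by
  have : (Sf (u * v) : FractionRing (MvPolynomial (Fin (N + 2)) k) →+* _)
      = (Sf u).comp (Sf v) := by
    apply IsLocalization.ringHom_ext (nonZeroDivisors (MvPolynomial (Fin (N + 2)) k))
    refine RingHom.ext fun p => ?_
    simp only [RingHom.coe_comp, Function.comp_apply, Sf_apply]
    rw [Equiv.Perm.coe_mul, ← rename_rename]
  rw [this]
  rfl

lemma Sf_one (f : FractionRing (MvPolynomial (Fin (N + 2)) k)) :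
    Sf (1 : Equiv.Perm (Fin (N + 2))) f = f := by
  have : (Sf (1 : Equiv.Perm (Fin (N + 2)))
      : FractionRing (MvPolynomial (Fin (N + 2)) k) →+* _) = RingHom.id _ := by
    apply IsLocalization.ringHom_ext (nonZeroDivisors (MvPolynomial (Fin (N + 2)) k))
    refine RingHom.ext fun p => ?_
    simp only [RingHom.coe_comp, Function.comp_apply, Sf_apply, RingHom.id_apply,
      Equiv.Perm.coe_one, rename_id, AlgHom.coe_id, id_eq]
  rw [this]
  rfl

end Perm

end DemAux
namespace DemAux
section Main
variable {N : ℕ} {k : Type*} [Field k]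

lemma AM_sub_ne (c : Fin (N + 1)) :
    algebraMap (MvPolynomial (Fin (N + 2)) k) (FractionRing (MvPolynomial (Fin (N + 2)) k))
      (X c.castSucc - X c.succ) ≠ 0 := by
  intro h
  have h2 : (X c.castSucc - X c.succ : MvPolynomial (Fin (N + 2)) k) = 0 :=
    IsFractionRing.injective _ _ (by rw [h, map_zero])
  rw [sub_eq_zero] at h2
  exact (Fin.castSucc_lt_succ (i := c)).ne (X_injective h2)

/-- The canonical choice of `t` for the abstract calculus. -/
noncomputable def tt : Fin (N + 1) → FractionRing (MvPolynomial (Fin (N + 2)) k) :=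
  fun c => (algebraMap (MvPolynomial (Fin (N + 2)) k)
    (FractionRing (MvPolynomial (Fin (N + 2)) k)) (X c.castSucc - X c.succ))⁻¹

lemma tt_ne (c : Fin (N + 1)) : (tt (k := k) c) ≠ 0 :=
  inv_ne_zero (AM_sub_ne c)

set_option maxHeartbeats 2000000 in
lemma compat {R : Type*} [CommRing R] (ψ : R →+* k)
    (D : Fin (N + 1) →
      MvPolynomial (Fin (N + 2)) R →ₗ[R] MvPolynomial (Fin (N + 2)) R)
    (hD : ∀ (c : Fin (N + 1)) (g : MvPolynomial (Fin (N + 2)) R),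
      (X c.castSucc - X c.succ) * D c g
        = g - rename (Equiv.swap c.castSucc c.succ) g) :
    ∀ (M : List (Fin (N + 1))) (g : MvPolynomial (Fin (N + 2)) R),
      algebraMap (MvPolynomial (Fin (N + 2)) k) (FractionRing (MvPolynomial (Fin (N + 2)) k))
          (MvPolynomial.map ψ ((M.foldr (fun c acc => (D c).comp acc) LinearMap.id) g))
        = DK (K := FractionRing (MvPolynomial (Fin (N + 2)) k)) tt Sf M
            (algebraMap (MvPolynomial (Fin (N + 2)) k)
              (FractionRing (MvPolynomial (Fin (N + 2)) k)) (MvPolynomial.map ψ g)) := by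
  intro M
  induction M with
  | nil => intro g; simp only [List.foldr_nil, LinearMap.id_coe, id_eq, DK]
  | cons c M ih =>
    intro g
    simp only [List.foldr_cons, LinearMap.comp_apply, DK]
    rw [← ih g]
    set h : MvPolynomial (Fin (N + 2)) R :=
      (M.foldr (fun c acc => (D c).comp acc) LinearMap.id) g with hh
    have e1 : algebraMap (MvPolynomial (Fin (N + 2)) k)
          (FractionRing (MvPolynomial (Fin (N + 2)) k))
          (MvPolynomial.map ψ (X c.castSucc - X c.succ))
        * algebraMap (MvPolynomial (Fin (N + 2)) k)
          (FractionRing (MvPolynomial (Fin (N + 2)) k)) (MvPolynomial.map ψ (D c h))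
        = algebraMap (MvPolynomial (Fin (N + 2)) k)
            (FractionRing (MvPolynomial (Fin (N + 2)) k)) (MvPolynomial.map ψ h)
          - Sf (sgen c) (algebraMap (MvPolynomial (Fin (N + 2)) k)
            (FractionRing (MvPolynomial (Fin (N + 2)) k)) (MvPolynomial.map ψ h)) := by
      rw [← map_mul, ← map_mul, hD c h, map_sub, map_sub, MvPolynomial.map_rename,
        ← Sf_apply]
    have e2 : MvPolynomial.map ψ ((X c.castSucc - X c.succ : MvPolynomial (Fin (N + 2)) R))
        = (X c.castSucc - X c.succ : MvPolynomial (Fin (N + 2)) k) := by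
      rw [map_sub, MvPolynomial.map_X, MvPolynomial.map_X]
    rw [← e1, e2, tt, ← mul_assoc, inv_mul_cancel₀ (AM_sub_ne c), one_mul]

set_option maxHeartbeats 2000000 in
theorem aux_main {R : Type*} [CommRing R] (ψ : R →+* k)
    (D : Fin (N + 1) →
      MvPolynomial (Fin (N + 2)) R →ₗ[R] MvPolynomial (Fin (N + 2)) R)
    (hD : ∀ (c : Fin (N + 1)) (g : MvPolynomial (Fin (N + 2)) R),
      (X c.castSucc - X c.succ) * D c g
        = g - rename (Equiv.swap c.castSucc c.succ) g)
    (L : List (Fin (N + 1)))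
    (hlen : L.length = (N + 2) * (N + 1) / 2)
    (hprod : (L.map fun c => Equiv.swap c.castSucc c.succ).prod
        = (Fin.revPerm : Equiv.Perm (Fin (N + 2)))) :
    ∃ g : MvPolynomial (Fin (N + 2)) R,
      (L.foldr (fun c acc => (D c).comp acc) LinearMap.id) g ≠ 0 := by
  classical
  by_contra hcon
  push_neg at hcon
  have hLL : (L.map fun c => sgen c).prod = (Fin.revPerm : Equiv.Perm (Fin (N + 2))) := hprod
  -- all the monomial sums vanish
  have hzero : ∀ α : Fin (N + 2) →₀ ℕ,
      ∑ w : Equiv.Perm (Fin (N + 2)), coef (K := FractionRing (MvPolynomial (Fin (N + 2)) k)) tt Sf L w *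
        Sf w (algebraMap (MvPolynomial (Fin (N + 2)) k)
          (FractionRing (MvPolynomial (Fin (N + 2)) k)) (monomial α (1 : k))) = 0 := by
    intro α
    have h1 := compat ψ D hD L (monomial α (1 : R))
    rw [hcon _, map_zero, map_zero] at h1
    have h2 : MvPolynomial.map ψ (monomial α (1 : R)) = monomial α (1 : k) := by
      rw [MvPolynomial.map_monomial, map_one]
    rw [h2, DK_expand (K := FractionRing (MvPolynomial (Fin (N + 2)) k)) tt Sf (fun u v f => Sf_mul u v f)
      (fun f => Sf_one f) L] at h1
    exact h1.symm
  -- Dedekind independence of characters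
  let χ : Equiv.Perm (Fin (N + 2)) → Multiplicative (Fin (N + 2) →₀ ℕ) →*
      FractionRing (MvPolynomial (Fin (N + 2)) k) := fun w =>
    { toFun := fun α => Sf w (algebraMap (MvPolynomial (Fin (N + 2)) k)
        (FractionRing (MvPolynomial (Fin (N + 2)) k)) (monomial (Multiplicative.toAdd α) 1)),
      map_one' := by
        have : monomial (Multiplicative.toAdd (1 : Multiplicative (Fin (N + 2) →₀ ℕ))) (1 : k)
            = 1 := by
          simp [MvPolynomial.monomial_zero']
        rw [this, map_one, map_one],
      map_mul' := by
        intro α β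
        rw [← map_mul, ← map_mul, MvPolynomial.monomial_mul, one_mul]
        rfl }
  have χinj : Function.Injective χ := by
    intro u v h
    refine Equiv.ext fun i => ?_
    have hh := DFunLike.congr_fun h (Multiplicative.ofAdd (Finsupp.single i 1))
    simp only [χ, MonoidHom.coe_mk, OneHom.coe_mk, toAdd_ofAdd] at hh
    have hX : (monomial (Finsupp.single i 1) (1 : k)) = X i := rfl
    rw [hX, Sf_apply, Sf_apply, rename_X, rename_X] at hh
    have := IsFractionRing.injective (MvPolynomial (Fin (N + 2)) k)
      (FractionRing (MvPolynomial (Fin (N + 2)) k)) hh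
    exact X_injective this
  have hLI := (linearIndependent_monoidHom (Multiplicative (Fin (N + 2) →₀ ℕ))
      (FractionRing (MvPolynomial (Fin (N + 2)) k))).comp χ χinj
  have hsum : ∑ w : Equiv.Perm (Fin (N + 2)), coef (K := FractionRing (MvPolynomial (Fin (N + 2)) k)) tt Sf L w •
      ((fun f : Multiplicative (Fin (N + 2) →₀ ℕ) →*
          FractionRing (MvPolynomial (Fin (N + 2)) k) => (f : _ → _)) ∘ χ) w = 0 := by
    funext α
    simp only [Finset.sum_apply, Pi.smul_apply, Function.comp_apply, smul_eq_mul,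
      Pi.zero_apply]
    have := hzero (Multiplicative.toAdd α)
    simpa [χ] using this
  have hcoef := Fintype.linearIndependent_iff.mp hLI
    (fun w => coef (K := FractionRing (MvPolynomial (Fin (N + 2)) k)) tt Sf L w) hsum
  have htop := coef_top (K := FractionRing (MvPolynomial (Fin (N + 2)) k)) tt Sf tt_ne L ?_
  · rw [hLL] at htop
    exact htop (hcoef Fin.revPerm)
  · rw [hLL, hlen, invCount_rev]
    have h21 : N + 2 - 1 = N + 1 := by omega
    rw [h21]

end Main
end DemAux

theorem demazure_longest_word_nonzero
    {R : Type*} [CommRing R] [Nontrivial R] {N : ℕ}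
    (D : Fin (N + 1) →
      MvPolynomial (Fin (N + 2)) R →ₗ[R] MvPolynomial (Fin (N + 2)) R)
    (hD : ∀ (c : Fin (N + 1)) (g : MvPolynomial (Fin (N + 2)) R),
      (X c.castSucc - X c.succ) * D c g
        = g - rename (Equiv.swap c.castSucc c.succ) g)
    (L : List (Fin (N + 1)))
    (hlen : L.length = (N + 2) * (N + 1) / 2)
    (hprod : (L.map fun c => Equiv.swap c.castSucc c.succ).prod
        = (Fin.revPerm : Equiv.Perm (Fin (N + 2))))
    (Dw : MvPolynomial (Fin (N + 2)) R →ₗ[R] MvPolynomial (Fin (N + 2)) R)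
    (hDw : Dw = L.foldr (fun c acc => (D c).comp acc) LinearMap.id) :
    ∃ g : MvPolynomial (Fin (N + 2)) R, Dw g ≠ 0 := by
  obtain ⟨m, hm⟩ := Ideal.exists_maximal R
  letI : Field (R ⧸ m) := Ideal.Quotient.field m
  obtain ⟨g, hg⟩ := DemAux.aux_main (Ideal.Quotient.mk m) D hD L hlen hprod
  exact ⟨g, by rw [hDw]; exact hg⟩
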